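/- arXiv:1604.04845 — 2 statements merged into one kernel-verified Lean document; each statement's English description precedes it below -/
import Mathlib

section
/- Let α ∈ [0, 1), θ > 0, δ̂ > 0 with δ̂ > (α²(1+α) + αθ)/(1 − α²). Let α_k ∈ [0, α], ρ_k ∈ (0, (δ̂ − α[α(1+α) + αδ̂ + θ])/(δ̂[1 + α(1+α) + αδ̂ + θ])), set λ_k = 1/(α_k + δ̂ρ_k), and let γ_{k+1} be a real number with 0 < γ_{k+1} ≤ α(1+α) + αδ̂. Then (1 − ρ_k)(α_k λ_k − 1)/ρ_k + γ_{k+1} ≤ −θ; equivalently, (α_k + δ̂ρ_k)(γ_{k+1} + θ) + δ̂ρ_k ≤ δ̂. -/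
open Filter Topology Set
open scoped InnerProductSpace RealInnerProductSpace Pointwise

noncomputable section

/-- The inertial parameter condition on the extrapolation parameters `αs` and the
relaxation parameters `ρs`. -/
def InertialCond (αs ρs : ℕ → ℝ) : Prop :=
  ∃ α ρ θ δ : ℝ,
    Monotone αs ∧ αs 1 = 0 ∧ (∀ k, 1 ≤ k → 0 ≤ αs k ∧ αs k ≤ α) ∧ 0 ≤ α ∧ α < 1 ∧
    0 < ρ ∧ 0 < θ ∧ 0 < δ ∧
    (α ^ 2 * (1 + α) + α * θ) / (1 - α ^ 2) < δ ∧
    (∀ k, 1 ≤ k → ρ ≤ ρs k ∧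
      ρs k < (δ - α * (α * (1 + α) + α * δ + θ)) / (δ * (1 + α * (1 + α) + α * δ + θ)))

variable {H : Type*} [NormedAddCommGroup H] [InnerProductSpace ℝ H]

/-- `g` is a proper, lower semicontinuous, convex function with values in `(-∞, +∞]`. -/
def Gamma0 (g : H → EReal) : Prop :=
  (∃ x, g x ≠ ⊤) ∧ (∀ x, g x ≠ ⊥) ∧ LowerSemicontinuous g ∧
  ∀ x y : H, ∀ a b : ℝ, 0 ≤ a → 0 ≤ b → a + b = 1 →
    g (a • x + b • y) ≤ (a : EReal) * g x + (b : EReal) * g y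

/-- The Legendre–Fenchel conjugate of `h`. -/
def fenchel (h : H → EReal) (y : H) : EReal :=
  ⨆ x : H, ((⟪y, x⟫_ℝ : ℝ) : EReal) - h x

/-- `p = prox_{τ g}(u)`, i.e. `p` minimizes `w ↦ g w + ‖u - w‖² / (2τ)`. -/
def IsProx (g : H → EReal) (τ : ℝ) (u p : H) : Prop :=
  ∀ w, g p + ((1 / (2 * τ) * ‖u - p‖ ^ 2 : ℝ) : EReal) ≤
    g w + ((1 / (2 * τ) * ‖u - w‖ ^ 2 : ℝ) : EReal)

/-- `p = prox_{S g}(u)` for a positive definite map `S` with inverse `Sinv`, i.e. `p`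
minimizes `w ↦ g w + (1/2) ⟪S⁻¹ (u - w), u - w⟫`. -/
def IsProxOp (g : H → EReal) (Sinv : H →L[ℝ] H) (u p : H) : Prop :=
  ∀ w, g p + ((1 / 2 * ⟪Sinv (u - p), u - p⟫_ℝ : ℝ) : EReal) ≤
    g w + ((1 / 2 * ⟪Sinv (u - w), u - w⟫_ℝ : ℝ) : EReal)

/-- `B` is cocoercive with respect to `Linv = L⁻¹`. -/
def CocoerciveWrt (B : H → H) (Linv : H →L[ℝ] H) : Prop :=
  ∀ x y : H, ⟪Linv (B x - B y), B x - B y⟫_ℝ ≤ ⟪B x - B y, x - y⟫_ℝ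

/-- `L` is a selfadjoint positive definite (bounded linear) map. -/
def PosDefSA (L : H →L[ℝ] H) : Prop :=
  (∀ x y : H, ⟪L x, y⟫_ℝ = ⟪x, L y⟫_ℝ) ∧ ∀ x : H, x ≠ 0 → 0 < ⟪L x, x⟫_ℝ

/-- `Linv` is a two-sided inverse of `L`. -/
def InvPair (L Linv : H →L[ℝ] H) : Prop :=
  (∀ x, L (Linv x) = x) ∧ (∀ x, Linv (L x) = x)

/-- The subdifferential of an extended-real-valued convex function. -/
def subdiff (g : H → EReal) (x : H) : Set H :=
  {u | ∀ z, g x + ((⟪u, z - x⟫_ℝ : ℝ) : EReal) ≤ g z}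

/-- The diagonal operator on `EuclideanSpace ℝ (Fin q)` with diagonal entries `t`. -/
def diagOp {q : ℕ} (t : Fin q → ℝ) :
    EuclideanSpace ℝ (Fin q) →L[ℝ] EuclideanSpace ℝ (Fin q) :=
  LinearMap.toContinuousLinearMap
  { toFun := fun x => (WithLp.toLp 2 (fun i => t i * x i) : EuclideanSpace ℝ (Fin q))
    map_add' := by intro x y; ext i; simp [mul_add]
    map_smul' := by intro c x; ext i; simp [smul_eq_mul]; try ring }

end
theorem inertial_parameter_key_estimate
    (α θ δ αk ρk γk1 : ℝ)
    (hα : 0 ≤ α ∧ α < 1) (hθ : 0 < θ) (hδ0 : 0 < δ)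
    (hδ : (α ^ 2 * (1 + α) + α * θ) / (1 - α ^ 2) < δ)
    (hαk : 0 ≤ αk ∧ αk ≤ α)
    (hρk : 0 < ρk ∧
      ρk < (δ - α * (α * (1 + α) + α * δ + θ)) / (δ * (1 + α * (1 + α) + α * δ + θ)))
    (hγ : 0 < γk1 ∧ γk1 ≤ α * (1 + α) + α * δ) :
    (1 - ρk) * (αk * (1 / (αk + δ * ρk)) - 1) / ρk + γk1 ≤ -θ ∧
    (αk + δ * ρk) * (γk1 + θ) + δ * ρk ≤ δ := by
  obtain ⟨hα0, hα1⟩ := hα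
  obtain ⟨hαk0, hαk1⟩ := hαk
  obtain ⟨hρ0, hρ1⟩ := hρk
  obtain ⟨hγ0, hγ1⟩ := hγ
  have h1 : (0:ℝ) < 1 - α ^ 2 := by nlinarith
  have hδc : α ^ 2 * (1 + α) + α * θ < δ * (1 - α ^ 2) := by
    have := (div_lt_iff₀ h1).mp hδ; linarith
  have hden : 0 < δ * (1 + α * (1 + α) + α * δ + θ) := by positivity
  have hρ1' : ρk * (δ * (1 + α * (1 + α) + α * δ + θ)) <
      δ - α * (α * (1 + α) + α * δ + θ) := (lt_div_iff₀ hden).mp hρ1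
  have hsec : (αk + δ * ρk) * (γk1 + θ) + δ * ρk ≤ δ := by
    nlinarith [mul_nonneg (sub_nonneg.mpr hαk1) (by linarith : (0:ℝ) ≤ γk1 + θ),
      mul_nonneg (by linarith : (0:ℝ) ≤ α * (1 + α) + α * δ + θ - (γk1 + θ))
        (by positivity : (0:ℝ) ≤ αk + δ * ρk)]
  have hpos : 0 < αk + δ * ρk := by positivity
  have e : (1 - ρk) * (αk * (1 / (αk + δ * ρk)) - 1) / ρk
      = -((1 - ρk) * δ / (αk + δ * ρk)) := by
    field_simp
    ring
  refine ⟨?_, hsec⟩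
  rw [e]
  have : (γk1 + θ) * (αk + δ * ρk) ≤ (1 - ρk) * δ := by nlinarith
  have h2 : γk1 + θ ≤ (1 - ρk) * δ / (αk + δ * ρk) := (le_div_iff₀ hpos).mpr this
  linarith
end

section
/- Let (φ^k)_{k∈ℕ}, (δ_k)_{k∈ℕ}, and (α_k)_{k∈ℕ} be sequences in [0, +∞) such that φ^{k+1} ≤ φ^k + α_k(φ^k − φ^{k−1}) + δ_k for all k ≥ 1, Σ_{k∈ℕ} δ_k < +∞, and there exists α with 0 ≤ α_k ≤ α < 1 for all k ∈ ℕ. Then (i) Σ_{k≥1} [φ^k − φ^{k−1}]₊ < +∞, where [t]₊ = max{t, 0}, and (ii) there exists φ* ∈ [0, +∞) such that lim_{k→+∞} φ^k = φ*. -/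
open Filter Topology Set
open scoped InnerProductSpace RealInnerProductSpace Pointwise

theorem inertial_sequence_lemma
    (φ δs αs : ℕ → ℝ)
    (hφ : ∀ k, 0 ≤ φ k) (hδs : ∀ k, 0 ≤ δs k) (hαs0 : ∀ k, 0 ≤ αs k)
    (α : ℝ) (hα : ∀ k, αs k ≤ α) (hα1 : α < 1) (hα0 : 0 ≤ α)
    (hrec : ∀ k, 1 ≤ k → φ (k + 1) ≤ φ k + αs k * (φ k - φ (k - 1)) + δs k)
    (hsum : Summable δs) :
    (Summable fun k => max (φ (k + 1) - φ k) 0) ∧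
    ∃ φstar : ℝ, 0 ≤ φstar ∧ Tendsto φ atTop (𝓝 φstar) := by

  classical
  set θ : ℕ → ℝ := fun k => max (φ (k + 1) - φ k) 0 with hθdef
  have hθ0 : ∀ k, 0 ≤ θ k := fun k => le_max_right _ _
  have hstep : ∀ k, θ (k + 1) ≤ α * θ k + δs (k + 1) := by
    intro k
    have hr := hrec (k + 1) (Nat.le_add_left 1 k)
    simp only [Nat.add_sub_cancel] at hr
    have h1 : φ (k + 1) - φ k ≤ θ k := le_max_left _ _
    have h2 : αs (k + 1) * (φ (k + 1) - φ k) ≤ α * θ k :=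
      le_trans (mul_le_mul_of_nonneg_left h1 (hαs0 _))
        (mul_le_mul_of_nonneg_right (hα _) (hθ0 k))
    apply max_le
    · linarith
    · have := hδs (k + 1)
      have := mul_nonneg hα0 (hθ0 k)
      linarith
  set D : ℝ := ∑' i, δs i with hDdef
  have hDsum : ∀ n, ∑ i ∈ Finset.range n, δs (i + 1) ≤ D := by
    intro n
    have h1 : ∑ i ∈ Finset.range n, δs (i + 1) ≤ ∑ i ∈ Finset.range (n + 1), δs i := by
      rw [Finset.sum_range_succ']
      have := hδs 0
      linarith
    exact h1.trans (Summable.sum_le_tsum _ (fun i _ => hδs i) hsum)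
  set C : ℝ := (θ 0 + D) / (1 - α) with hCdef
  have hαpos : 0 < 1 - α := by linarith
  have hDnn : 0 ≤ D := tsum_nonneg hδs
  have hCbound : ∀ n, ∑ i ∈ Finset.range n, θ i ≤ C := by
    intro n
    induction n with
    | zero =>
      simp only [Finset.range_zero, Finset.sum_empty]
      positivity
    | succ n ih =>
      have hS : ∑ i ∈ Finset.range (n + 1), θ i
          = θ 0 + ∑ i ∈ Finset.range n, θ (i + 1) := by
        rw [Finset.sum_range_succ']; ring
      have hmono : ∑ i ∈ Finset.range n, θ i ≤ ∑ i ∈ Finset.range (n + 1), θ i := by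
        rw [Finset.sum_range_succ]
        have := hθ0 n; linarith
      have h2 : ∑ i ∈ Finset.range n, θ (i + 1)
          ≤ α * ∑ i ∈ Finset.range n, θ i + ∑ i ∈ Finset.range n, δs (i + 1) := by
        rw [Finset.mul_sum, ← Finset.sum_add_distrib]
        exact Finset.sum_le_sum fun i _ => hstep i
      have h3 : ∑ i ∈ Finset.range (n + 1), θ i
          ≤ θ 0 + α * ∑ i ∈ Finset.range (n + 1), θ i + D := by
        have h4 : α * ∑ i ∈ Finset.range n, θ i
            ≤ α * ∑ i ∈ Finset.range (n + 1), θ i :=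
          mul_le_mul_of_nonneg_left hmono hα0
        have := hDsum n
        linarith
      rw [hCdef, le_div_iff₀ hαpos]
      linarith
  have hθsum : Summable θ := summable_of_sum_range_le hθ0 hCbound
  refine ⟨hθsum, ?_⟩
  set T : ℝ := ∑' i, θ i with hTdef
  set t : ℕ → ℝ := fun n => φ n - ∑ i ∈ Finset.range n, θ i with htdef
  have hant : Antitone t := by
    apply antitone_nat_of_succ_le
    intro n
    simp only [htdef, Finset.sum_range_succ]
    have : φ (n + 1) - φ n ≤ θ n := le_max_left _ _
    linarith
  have hbdd : BddBelow (Set.range t) := by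
    refine ⟨-T, ?_⟩
    rintro x ⟨n, rfl⟩
    have h1 : ∑ i ∈ Finset.range n, θ i ≤ T :=
      Summable.sum_le_tsum _ (fun i _ => hθ0 i) hθsum
    have := hφ n
    simp only [htdef]
    linarith
  have htconv : Tendsto t atTop (𝓝 (⨅ n, t n)) := tendsto_atTop_ciInf hant hbdd
  have hSconv : Tendsto (fun n => ∑ i ∈ Finset.range n, θ i) atTop (𝓝 T) :=
    hθsum.hasSum.tendsto_sum_nat
  have hφconv : Tendsto φ atTop (𝓝 ((⨅ n, t n) + T)) := by
    have : φ = fun n => t n + ∑ i ∈ Finset.range n, θ i := by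
      funext n; simp [htdef]
    rw [this]
    exact htconv.add hSconv
  exact ⟨_, ge_of_tendsto hφconv (Filter.Eventually.of_forall hφ), hφconv⟩
end
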